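/- Let G be a semi-simple group (i.e., G has no nontrivial normal abelian subgroup) with exactly n distinct element-centralizers, n a positive integer. Then G is finite and |G| ≤ (n−1)!. -/

import Mathlib

/-- For a group `G`, the set of element-centralizers `{C_G(x) : x ∈ G}`. -/
def centralizersSet (G : Type*) [Group G] : Set (Subgroup G) :=
  {H : Subgroup G | ∃ x : G, H = Subgroup.centralizer {x}}

section Aux

variable {G : Type*} [Group G]

/-- If conjugation by `h` fixes every element-centralizer, then all conjugates of `h`
pairwise commute, and by semi-simplicity `h = 1`. -/
theorem key_triv (hss : ∀ H : Subgroup G, H.Normal → (∀ a ∈ H, ∀ b ∈ H, a * b = b * a) → H = ⊥)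
    (h : G) (hP : ∀ x : G, Subgroup.centralizer ({h * x * h⁻¹} : Set G)
      = Subgroup.centralizer ({x} : Set G)) : h = 1 := by
  -- every x commutes with h⁻¹ * x * h
  have hA : ∀ x : G, Commute x (h⁻¹ * x * h) := by
    intro x
    have h1 : Subgroup.centralizer ({x} : Set G)
        = Subgroup.centralizer ({h⁻¹ * x * h} : Set G) := by
      have h2 := hP (h⁻¹ * x * h)
      have e : h * (h⁻¹ * x * h) * h⁻¹ = x := by group
      rw [e] at h2
      exact h2
    have hx : x ∈ Subgroup.centralizer ({x} : Set G) :=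
      Subgroup.mem_centralizer_singleton_iff.2 rfl
    rw [h1] at hx
    exact Subgroup.mem_centralizer_singleton_iff.1 hx
  -- every x commutes with x⁻¹ * h⁻¹ * x * h
  have hstar : ∀ x : G, Commute x (x⁻¹ * h⁻¹ * x * h) := by
    intro x
    have c1 : Commute x (x⁻¹ * (h⁻¹ * x * h)) :=
      ((Commute.refl x).inv_right).mul_right (hA x)
    have e : x⁻¹ * (h⁻¹ * x * h) = x⁻¹ * h⁻¹ * x * h := by group
    rwa [e] at c1
  -- h commutes with every y⁻¹ * h * y
  have hconj : ∀ y : G, Commute h (y⁻¹ * h * y) := by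
    intro y
    have s1 : Commute y (y⁻¹ * h⁻¹ * y * h) := hstar y
    have s2 : Commute (h * y) (y⁻¹ * h⁻¹ * y * h) := by
      have c := hstar (h * y)
      have e : (h * y)⁻¹ * h⁻¹ * (h * y) * h = y⁻¹ * h⁻¹ * y * h := by group
      rwa [e] at c
    have s3 : Commute h (y⁻¹ * h⁻¹ * y * h) := by
      have c := Commute.mul_left s2 s1.inv_left
      have e : h * y * y⁻¹ = h := by group
      rwa [e] at c
    have s4 : Commute h (y⁻¹ * h⁻¹ * y) := by
      have c := s3.mul_right (Commute.refl h).inv_right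
      have e : y⁻¹ * h⁻¹ * y * h * h⁻¹ = y⁻¹ * h⁻¹ * y := by group
      rwa [e] at c
    have c := s4.inv_right
    have e : (y⁻¹ * h⁻¹ * y)⁻¹ = y⁻¹ * h * y := by group
    rwa [e] at c
  -- any two conjugates of h commute
  have hpair : ∀ a b : G, Commute (a * h * a⁻¹) (b * h * b⁻¹) := by
    intro a b
    have c := hconj (b⁻¹ * a)
    have c2 := c.map (MulAut.conj a).toMonoidHom
    have e1 : (MulAut.conj a).toMonoidHom h = a * h * a⁻¹ := by
      simp [MulAut.conj_apply]
    have e2 : (MulAut.conj a).toMonoidHom ((b⁻¹ * a)⁻¹ * h * (b⁻¹ * a)) = b * h * b⁻¹ := by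
      simp only [MulEquiv.coe_toMonoidHom, MulAut.conj_apply]
      group
    rwa [e1, e2] at c2
  -- the normal closure of {h} is abelian
  set A : Subgroup G := Subgroup.normalClosure ({h} : Set G) with hAdef
  have hgen : ∀ u ∈ Group.conjugatesOfSet ({h} : Set G),
      ∀ v ∈ Group.conjugatesOfSet ({h} : Set G), Commute u v := by
    intro u hu v hv
    rw [Group.mem_conjugatesOfSet_iff] at hu hv
    obtain ⟨a', ha', hconja⟩ := hu
    obtain ⟨b', hb', hconjb⟩ := hv
    rw [Set.mem_singleton_iff] at ha' hb'
    rw [ha'] at hconja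
    rw [hb'] at hconjb
    rw [isConj_iff] at hconja hconjb
    obtain ⟨c, rfl⟩ := hconja
    obtain ⟨d, rfl⟩ := hconjb
    exact hpair c d
  have habel : ∀ a ∈ A, ∀ b ∈ A, a * b = b * a := by
    intro a ha b hb
    have ha' : a ∈ Subgroup.closure (Group.conjugatesOfSet ({h} : Set G)) := ha
    have hb' : b ∈ Subgroup.closure (Group.conjugatesOfSet ({h} : Set G)) := hb
    refine Subgroup.closure_induction₂
      (p := fun x y _ _ => Commute x y)
      (fun x y hx hy => hgen x hx y hy)
      (fun x _ => Commute.one_left x)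
      (fun x _ => Commute.one_right x)
      (fun x y z _ _ _ cxz cyz => cxz.mul_left cyz)
      (fun y z x _ _ _ cxy cxz => cxy.mul_right cxz)
      (fun x y _ _ c => c.inv_left)
      (fun x y _ _ c => c.inv_right)
      ha' hb'
  have hAbot : A = ⊥ := hss A (Subgroup.normalClosure_normal) habel
  have hhA : h ∈ A := Subgroup.subset_normalClosure (Set.mem_singleton h)
  rw [hAbot] at hhA
  exact Subgroup.mem_bot.1 hhA

/-- Conjugation map on subgroups. -/
noncomputable def cmap (g : G) (H : Subgroup G) : Subgroup G :=
  Subgroup.map (MulAut.conj g).toMonoidHom H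

theorem cmap_centralizer (g x : G) :
    cmap g (Subgroup.centralizer ({x} : Set G))
      = Subgroup.centralizer ({g * x * g⁻¹} : Set G) := by
  ext y
  rw [cmap, Subgroup.mem_map_equiv, Subgroup.mem_centralizer_singleton_iff,
    Subgroup.mem_centralizer_singleton_iff, MulAut.conj_symm_apply]
  constructor
  · intro e
    have e2 := congrArg (fun z => g * z * g⁻¹) e
    calc y * (g * x * g⁻¹) = g * (g⁻¹ * y * g * x) * g⁻¹ := by group
    _ = g * (x * (g⁻¹ * y * g)) * g⁻¹ := by rw [e2]
    _ = g * x * g⁻¹ * y := by group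
  · intro e
    have e2 := congrArg (fun z => g⁻¹ * z * g) e
    calc g⁻¹ * y * g * x = g⁻¹ * (y * (g * x * g⁻¹)) * g := by group
    _ = g⁻¹ * (g * x * g⁻¹ * y) * g := by rw [e2]
    _ = x * (g⁻¹ * y * g) := by group

theorem cmap_cmap (g g' : G) (H : Subgroup G) :
    cmap g (cmap g' H) = cmap (g * g') H := by
  ext y
  simp only [cmap, Subgroup.mem_map_equiv, MulAut.conj_symm_apply]
  constructor
  · intro hy
    have e : (g * g')⁻¹ * y * (g * g') = g'⁻¹ * (g⁻¹ * y * g) * g' := by group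
    rwa [e]
  · intro hy
    have e : g'⁻¹ * (g⁻¹ * y * g) * g' = (g * g')⁻¹ * y * (g * g') := by group
    rwa [e]

theorem cmap_one (H : Subgroup G) : cmap (1 : G) H = H := by
  ext y
  simp [cmap, Subgroup.mem_map_equiv, MulAut.conj_symm_apply]

theorem cmap_top (g : G) : cmap g (⊤ : Subgroup G) = ⊤ := by
  ext y
  simp only [cmap, Subgroup.mem_map_equiv, Subgroup.mem_top, iff_true]

end Aux

theorem semisimple_finite_of_centralizers (G : Type*) [Group G] (n : ℕ) (hn : 0 < n)
    (hss : ∀ H : Subgroup G, H.Normal → (∀ a ∈ H, ∀ b ∈ H, a * b = b * a) → H = ⊥)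
    (h : (centralizersSet G).ncard = n) :
    Finite G ∧ Nat.card G ≤ Nat.factorial (n - 1) := by
  classical
  -- the set of centralizers is finite
  have hfin : (centralizersSet G).Finite := by
    by_contra hinf
    have hinf' : (centralizersSet G).Infinite := hinf
    rw [hinf'.ncard] at h
    omega
  have hTop : (⊤ : Subgroup G) ∈ centralizersSet G := by
    refine ⟨1, ?_⟩
    ext y
    simp [Subgroup.mem_centralizer_singleton_iff]
  set S : Set (Subgroup G) := centralizersSet G \ {⊤} with hSdef
  have hSfin : S.Finite := hfin.subset Set.diff_subset
  have hScard : S.ncard = n - 1 := by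
    rw [hSdef, Set.ncard_diff_singleton_of_mem hTop, h]
  -- conjugation maps S to S
  have hmemS : ∀ (g : G) (H : Subgroup G), H ∈ S → cmap g H ∈ S := by
    rintro g H ⟨⟨x, rfl⟩, hne⟩
    constructor
    · exact ⟨g * x * g⁻¹, cmap_centralizer g x⟩
    · intro htop
      rw [Set.mem_singleton_iff] at htop
      apply hne
      rw [Set.mem_singleton_iff]
      have : cmap g⁻¹ (cmap g (Subgroup.centralizer ({x} : Set G))) = cmap g⁻¹ ⊤ := by
        rw [htop]
      rwa [cmap_cmap, inv_mul_cancel, cmap_one, cmap_top] at this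
  have hinvS : ∀ (g : G) (H : ↥S), cmap g⁻¹ (cmap g (H : Subgroup G)) = (H : Subgroup G) := by
    intro g H
    rw [cmap_cmap, inv_mul_cancel, cmap_one]
  have hinvS' : ∀ (g : G) (H : ↥S), cmap g (cmap g⁻¹ (H : Subgroup G)) = (H : Subgroup G) := by
    intro g H
    rw [cmap_cmap, mul_inv_cancel, cmap_one]
  -- the injection into permutations of S
  haveI : Finite ↥S := hSfin.to_subtype
  let Φ : G → (↥S ≃ ↥S) := fun g =>
    { toFun := fun H => ⟨cmap g H, hmemS g H H.2⟩
      invFun := fun H => ⟨cmap g⁻¹ H, hmemS g⁻¹ H H.2⟩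
      left_inv := fun H => Subtype.ext (hinvS g H)
      right_inv := fun H => Subtype.ext (hinvS' g H) }
  have hΦinj : Function.Injective Φ := by
    intro g g' heq
    -- conjugation by g and g' agree on every centralizer
    have hag : ∀ x : G, cmap g (Subgroup.centralizer ({x} : Set G))
        = cmap g' (Subgroup.centralizer ({x} : Set G)) := by
      intro x
      by_cases hx : Subgroup.centralizer ({x} : Set G) = ⊤
      · -- x is central, so conjugation fixes its centralizer
        have hc : ∀ z : G, z * x = x * z := by
          intro z
          have : z ∈ Subgroup.centralizer ({x} : Set G) := by rw [hx]; trivial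
          exact Subgroup.mem_centralizer_singleton_iff.1 this
        have e : ∀ u : G, u * x * u⁻¹ = x := by
          intro u
          rw [hc u]; group
        rw [cmap_centralizer, cmap_centralizer, e g, e g']
      · have hmem : Subgroup.centralizer ({x} : Set G) ∈ S :=
          ⟨⟨x, rfl⟩, fun hh => hx (Set.mem_singleton_iff.1 hh)⟩
        have := congrFun (congrArg (fun (e : ↥S ≃ ↥S) => (e : ↥S → ↥S)) heq)
          ⟨Subgroup.centralizer ({x} : Set G), hmem⟩
        exact congrArg Subtype.val this
    -- hence g' * g⁻¹ fixes all centralizers under conjugation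
    have hP : ∀ x : G, Subgroup.centralizer ({(g' * g⁻¹) * x * (g' * g⁻¹)⁻¹} : Set G)
        = Subgroup.centralizer ({x} : Set G) := by
      intro x
      have h1 := hag (g⁻¹ * x * g)
      rw [cmap_centralizer, cmap_centralizer] at h1
      have e1 : g * (g⁻¹ * x * g) * g⁻¹ = x := by group
      have e2 : g' * (g⁻¹ * x * g) * g'⁻¹ = (g' * g⁻¹) * x * (g' * g⁻¹)⁻¹ := by group
      rw [e1, e2] at h1
      exact h1.symm
    have h1 : g' * g⁻¹ = 1 := key_triv hss (g' * g⁻¹) hP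
    have : g' = g := by
      have := congrArg (fun z => z * g) h1
      simpa using this
    exact this.symm
  haveI hGfin : Finite G := Finite.of_injective Φ hΦinj
  constructor
  · exact hGfin
  · have hle : Nat.card G ≤ Nat.card (↥S ≃ ↥S) := Nat.card_le_card_of_injective Φ hΦinj
    haveI : Fintype ↥S := hSfin.fintype
    have hcard : Nat.card (↥S ≃ ↥S) = Nat.factorial (n - 1) := by
      rw [Nat.card_eq_fintype_card, Fintype.card_perm]
      congr 1
      rw [← hScard, ← Nat.card_coe_set_eq, Nat.card_eq_fintype_card]
    rwa [hcard] at hle
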